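/- Let C be the horocycle λ(x₁² + x₂² − x₀²) + (x₂ − x₀)² = 0 with λ ≠ 0 (hyperosculating the absolute conic x₁² + x₂² = x₀² at [1,0,1]). Then the Frégier locus of C is contained in the conic λ(x₁² + x₂² − x₀²) + 5(x₂ − x₀)² = 0; in particular the Frégier locus of a regular horocycle is never contained in a line. -/

import Mathlib

/-- Points of the real projective plane, given by homogeneous coordinates `[x₀, x₁, x₂]`. -/
abbrev PP := Fin 3 → ℝ

/-- Cross product: line joining two points / point of intersection of two lines. -/
def cross3 (a b : PP) : PP :=
  ![a 1 * b 2 - a 2 * b 1, a 2 * b 0 - a 0 * b 2, a 0 * b 1 - a 1 * b 0]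

def dot3 (a b : PP) : ℝ := a 0 * b 0 + a 1 * b 1 + a 2 * b 2

/-- `q`, `r`, `f` are collinear. -/
def Coll (q r f : PP) : Prop := dot3 (cross3 q r) f = 0

/-- Euclidean perpendicularity of the lines `pq` and `pr`
(standard inner product on directions in the affine chart `x₀ = 1`). -/
def EuclidPerp (p q r : PP) : Prop :=
  (q 1 * p 0 - p 1 * q 0) * (r 1 * p 0 - p 1 * r 0) +
    (q 2 * p 0 - p 2 * q 0) * (r 2 * p 0 - p 2 * r 0) = 0

/-- Hyperbolic perpendicularity of the lines `pq` and `pr`: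
conjugacy with respect to the absolute conic `N : x₁² + x₂² = x₀²`
(a line is perpendicular to another iff it contains its pole w.r.t. `N`). -/
def HypPerp (p q r : PP) : Prop :=
  -(cross3 p q 0 * cross3 p r 0) + cross3 p q 1 * cross3 p r 1 +
    cross3 p q 2 * cross3 p r 2 = 0

/-- Elliptic perpendicularity of the lines `pq` and `pr`:
conjugacy with respect to the absolute polarity `x₀² + x₁² + x₂²`. -/
def EllPerp (p q r : PP) : Prop :=
  dot3 (cross3 p q) (cross3 p r) = 0

/-- `f` lies on every chord `qr` of the conic `C` such that the legs `pq`, `pr`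
are perpendicular (a right triangle inscribed in `C` with right angle at `p`). -/
def IsFregier (OnC : PP → Prop) (Perp : PP → PP → PP → Prop) (p f : PP) : Prop :=
  ∀ q r : PP, OnC q → OnC r → cross3 p q ≠ 0 → cross3 p r ≠ 0 → Perp p q r →
    Coll q r f

/-- `f` is THE Frégier point of the conic `C` at `p`: the common point of the
hypotenuses of all right triangles inscribed in `C` with right angle at `p`
(unique up to scalar). -/
def IsFregierPoint (OnC : PP → Prop) (Perp : PP → PP → PP → Prop) (p f : PP) : Prop :=
  f ≠ 0 ∧ IsFregier OnC Perp p f ∧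
    ∀ f' : PP, f' ≠ 0 → IsFregier OnC Perp p f' → ∃ t : ℝ, t ≠ 0 ∧ f' = t • f

/-- The Frégier locus of a conic: all Frégier points as `p` varies on the conic. -/
def FregierLocus (OnC : PP → Prop) (Perp : PP → PP → PP → Prop) : Set PP :=
  { f | ∃ p : PP, p ≠ 0 ∧ OnC p ∧ IsFregierPoint OnC Perp p f }

set_option maxHeartbeats 1000000

def Pt (l s : ℝ) : PP := ![l*s^2+l+1, -2*l*s, l*s^2-l+1]
def Ft (l t : ℝ) : PP := ![l*t^2+l+5, -2*l*t, l*t^2-l+5]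
def Rt (l t a : ℝ) : PP :=
  ![l*(l*a*t-4)^2+(l+1)*(l*a)^2, -2*l*(l*a)*(l*a*t-4), l*(l*a*t-4)^2+(1-l)*(l*a)^2]

@[simp] lemma cross3_a0 (a b : PP) : cross3 a b 0 = a 1 * b 2 - a 2 * b 1 := rfl
@[simp] lemma cross3_a1 (a b : PP) : cross3 a b 1 = a 2 * b 0 - a 0 * b 2 := rfl
@[simp] lemma cross3_a2 (a b : PP) : cross3 a b 2 = a 0 * b 1 - a 1 * b 0 := rfl
@[simp] lemma Pt_a0 (l s : ℝ) : Pt l s 0 = l*s^2+l+1 := rfl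
@[simp] lemma Pt_a1 (l s : ℝ) : Pt l s 1 = -2*l*s := rfl
@[simp] lemma Pt_a2 (l s : ℝ) : Pt l s 2 = l*s^2-l+1 := rfl
@[simp] lemma Ft_a0 (l t : ℝ) : Ft l t 0 = l*t^2+l+5 := rfl
@[simp] lemma Ft_a1 (l t : ℝ) : Ft l t 1 = -2*l*t := rfl
@[simp] lemma Ft_a2 (l t : ℝ) : Ft l t 2 = l*t^2-l+5 := rfl
@[simp] lemma Rt_a0 (l t a : ℝ) : Rt l t a 0 = l*(l*a*t-4)^2+(l+1)*(l*a)^2 := rfl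
@[simp] lemma Rt_a1 (l t a : ℝ) : Rt l t a 1 = -2*l*(l*a)*(l*a*t-4) := rfl
@[simp] lemma Rt_a2 (l t a : ℝ) : Rt l t a 2 = l*(l*a*t-4)^2+(1-l)*(l*a)^2 := rfl
@[simp] lemma smul_a (c : ℝ) (v : PP) (i : Fin 3) : (c • v) i = c * v i := rfl
@[simp] lemma zero_a (i : Fin 3) : (0 : PP) i = 0 := rfl

lemma pp_eq (a b : PP) (h0 : a 0 = b 0) (h1 : a 1 = b 1) (h2 : a 2 = b 2) : a = b := by
  funext i; fin_cases i <;> assumption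

lemma pp_ne_zero (v : PP) (h : ¬ (v 0 = 0 ∧ v 1 = 0 ∧ v 2 = 0)) : v ≠ 0 := by
  intro hv; exact h ⟨by rw [hv]; rfl, by rw [hv]; rfl, by rw [hv]; rfl⟩

lemma cross3_self (v : PP) : cross3 v v = 0 := by
  apply pp_eq <;> simp <;> ring

lemma cross3_smul_left (c : ℝ) (p q : PP) : cross3 (c • p) q = c • cross3 p q := by
  apply pp_eq <;> simp <;> ring

lemma cross3_smul_right (c : ℝ) (p q : PP) : cross3 p (c • q) = c • cross3 p q := by
  apply pp_eq <;> simp <;> ring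

lemma grassmann (v x y : PP) (hx : dot3 x v = 0) (hy : dot3 y v = 0) :
    cross3 v (cross3 x y) = 0 := by
  simp only [dot3] at hx hy
  apply pp_eq <;> simp
  · linear_combination (x 0) * hy - (y 0) * hx
  · linear_combination (x 1) * hy - (y 1) * hx
  · linear_combination (x 2) * hy - (y 2) * hx

lemma parallel_of_cross_eq_zero (v w : PP) (h : cross3 v w = 0) (hw : w ≠ 0) :
    ∃ τ : ℝ, v = τ • w := by
  have h0 := congrFun h 0
  have h1 := congrFun h 1
  have h2 := congrFun h 2
  simp only [cross3_a0, cross3_a1, cross3_a2, zero_a] at h0 h1 h2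
  by_cases hw0 : w 0 ≠ 0
  · refine ⟨v 0 / w 0, pp_eq _ _ ?_ ?_ ?_⟩ <;> (simp; field_simp)
    · linear_combination -h2
    · linear_combination h1
  · by_cases hw1 : w 1 ≠ 0
    · refine ⟨v 1 / w 1, pp_eq _ _ ?_ ?_ ?_⟩ <;> (simp; field_simp)
      · linear_combination h2
      · linear_combination -h0
    · by_cases hw2 : w 2 ≠ 0
      · refine ⟨v 2 / w 2, pp_eq _ _ ?_ ?_ ?_⟩ <;> (simp; field_simp)
        · linear_combination -h1
        · linear_combination h0
      · push_neg at hw0 hw1 hw2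
        exact absurd (pp_eq w 0 hw0 hw1 hw2) hw

lemma onC_Pt (l s : ℝ) :
    l * ((Pt l s) 1 ^ 2 + (Pt l s) 2 ^ 2 - (Pt l s) 0 ^ 2) + ((Pt l s) 2 - (Pt l s) 0) ^ 2 = 0 := by
  simp; ring

lemma onC_Rt (l t a : ℝ) :
    l * ((Rt l t a) 1 ^ 2 + (Rt l t a) 2 ^ 2 - (Rt l t a) 0 ^ 2)
      + ((Rt l t a) 2 - (Rt l t a) 0) ^ 2 = 0 := by
  simp; ring

lemma Pt_ne_zero (l : ℝ) (hl : l ≠ 0) (s : ℝ) : Pt l s ≠ 0 := by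
  refine pp_ne_zero _ ?_
  rintro ⟨h0, -, h2⟩
  simp at h0 h2
  exact hl (by linarith)

lemma Ft_ne_zero (l : ℝ) (hl : l ≠ 0) (t : ℝ) : Ft l t ≠ 0 := by
  refine pp_ne_zero _ ?_
  rintro ⟨h0, -, h2⟩
  simp at h0 h2
  exact hl (by linarith)

/-- Classification of the nonzero points of the horocycle. -/
lemma classify (l : ℝ) (hl0 : l ≠ 0) (v : PP) (hv : v ≠ 0)
    (hC : l * (v 1 ^ 2 + v 2 ^ 2 - v 0 ^ 2) + (v 2 - v 0) ^ 2 = 0) :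
    (v 1 = 0 ∧ v 2 = v 0 ∧ v 0 ≠ 0) ∨ ∃ σ s : ℝ, σ ≠ 0 ∧ v = σ • Pt l s := by
  by_cases h02 : v 2 = v 0
  · left
    have h1 : l * v 1 ^ 2 = 0 := by
      have hd : v 2 - v 0 = 0 := by rw [h02]; ring
      linear_combination hC - (l * (v 2 + v 0) + (v 2 - v 0)) * hd
    have hv1 : v 1 = 0 := by
      have := mul_eq_zero.1 h1
      rcases this with h | h
      · exact absurd h hl0
      · exact pow_eq_zero_iff (by norm_num) |>.1 h
    refine ⟨hv1, h02, ?_⟩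
    intro h0
    exact hv (pp_eq v 0 h0 hv1 (by rw [h02, h0]; rfl))
  · right
    have hd : v 0 - v 2 ≠ 0 := fun h => h02 (by linarith [sub_eq_zero.1 h])
    refine ⟨(v 0 - v 2) / (2 * l), -(v 1) / (v 0 - v 2), ?_, ?_⟩
    · exact div_ne_zero hd (by simpa using hl0)
    · apply pp_eq <;> simp <;> field_simp <;> ring_nf
      · linear_combination -hC
      · linear_combination -hC

def E3 : PP := ![1, 0, 1]
@[simp] lemma E3_a0 : E3 0 = 1 := rfl
@[simp] lemma E3_a1 : E3 1 = 0 := rfl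
@[simp] lemma E3_a2 : E3 2 = 1 := rfl

/-- At the contact point `[1,0,1]`, every point vacuously satisfies `IsFregier`. -/
lemma isFregier_inf (l : ℝ) (hl0 : l ≠ 0) (μ : ℝ) (hμ : μ ≠ 0) (f : PP) :
    IsFregier (fun v => l * (v 1 ^ 2 + v 2 ^ 2 - v 0 ^ 2) + (v 2 - v 0) ^ 2 = 0)
      HypPerp (μ • E3) f := by
  intro q r hqC hrC hpq hpr hperp
  exfalso
  have hq0 : q ≠ 0 := by rintro rfl; exact hpq (by apply pp_eq <;> simp)
  have hr0 : r ≠ 0 := by rintro rfl; exact hpr (by apply pp_eq <;> simp)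
  rcases classify l hl0 q hq0 hqC with ⟨hq1, hq2, hq0'⟩ | ⟨σ, s, hσ, rfl⟩
  · refine hpq ?_
    have hqe : q = q 0 • E3 := by apply pp_eq <;> simp [hq1, hq2]
    rw [hqe, cross3_smul_left, cross3_smul_right, cross3_self]; simp
  rcases classify l hl0 r hr0 hrC with ⟨hr1, hr2, hr0'⟩ | ⟨ρ, u, hρ, rfl⟩
  · refine hpr ?_
    have hre : r = r 0 • E3 := by apply pp_eq <;> simp [hr1, hr2]
    rw [hre, cross3_smul_left, cross3_smul_right, cross3_self]; simp
  have key : μ^2 * σ * ρ * (4*l^2) = 0 := by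
    simp only [HypPerp, cross3_a0, cross3_a1, cross3_a2, smul_a, Pt_a0, Pt_a1, Pt_a2,
      E3_a0, E3_a1, E3_a2] at hperp
    linear_combination hperp
  have : μ^2 * σ * ρ * (4*l^2) ≠ 0 := by
    apply mul_ne_zero (mul_ne_zero (mul_ne_zero (pow_ne_zero 2 hμ) hσ) hρ)
    exact mul_ne_zero (by norm_num) (pow_ne_zero 2 hl0)
  exact this key

/-- The Frégier property of `Ft l t` at the point `μ • Pt l t`. -/
lemma isFregier_main (l : ℝ) (hl0 : l ≠ 0) (t μ : ℝ) (hμ : μ ≠ 0) :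
    IsFregier (fun v => l * (v 1 ^ 2 + v 2 ^ 2 - v 0 ^ 2) + (v 2 - v 0) ^ 2 = 0)
      HypPerp (μ • Pt l t) (Ft l t) := by
  intro q r hqC hrC hpq hpr hperp
  have hq0 : q ≠ 0 := by rintro rfl; exact hpq (by apply pp_eq <;> simp)
  have hr0 : r ≠ 0 := by rintro rfl; exact hpr (by apply pp_eq <;> simp)
  rcases classify l hl0 q hq0 hqC with ⟨hq1, hq2, hq0'⟩ | ⟨σ, s, hσ, rfl⟩
  · rcases classify l hl0 r hr0 hrC with ⟨hr1, hr2, hr0'⟩ | ⟨ρ, u, hρ, rfl⟩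
    · -- both at the contact point : the chord degenerates
      have : cross3 q r = 0 := by apply pp_eq <;> simp [hq1, hq2, hr1, hr2] <;> ring
      unfold Coll; rw [this]; simp [dot3]
    · -- q at contact point, r generic : forces u = t, contradiction
      exfalso
      have hqe : q = q 0 • E3 := by apply pp_eq <;> simp [hq1, hq2]
      rw [hqe] at hperp
      have key : (μ^2 * (q 0) * ρ * (4*l^3)) * ((u-t)*(u-t)) = 0 := by
        simp only [HypPerp, cross3_a0, cross3_a1, cross3_a2, smul_a, Pt_a0, Pt_a1, Pt_a2,
          E3_a0, E3_a1, E3_a2] at hperp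
        linear_combination hperp
      have hA : (μ^2 * (q 0) * ρ * (4*l^3)) ≠ 0 :=
        mul_ne_zero (mul_ne_zero (mul_ne_zero (pow_ne_zero 2 hμ) hq0') hρ)
          (mul_ne_zero (by norm_num) (pow_ne_zero 3 hl0))
      have hut : u = t := by
        rcases mul_eq_zero.1 key with h | h
        · exact absurd h hA
        · rcases mul_eq_zero.1 h with h' | h' <;> linarith [sub_eq_zero.1 h']
      refine hpr ?_
      rw [hut, cross3_smul_left, cross3_smul_right, cross3_self]; simp
  · rcases classify l hl0 r hr0 hrC with ⟨hr1, hr2, hr0'⟩ | ⟨ρ, u, hρ, rfl⟩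
    · -- r at contact point, q generic : forces s = t, contradiction
      exfalso
      have hre : r = r 0 • E3 := by apply pp_eq <;> simp [hr1, hr2]
      rw [hre] at hperp
      have key : (μ^2 * (r 0) * σ * (4*l^3)) * ((s-t)*(s-t)) = 0 := by
        simp only [HypPerp, cross3_a0, cross3_a1, cross3_a2, smul_a, Pt_a0, Pt_a1, Pt_a2,
          E3_a0, E3_a1, E3_a2] at hperp
        linear_combination hperp
      have hA : (μ^2 * (r 0) * σ * (4*l^3)) ≠ 0 :=
        mul_ne_zero (mul_ne_zero (mul_ne_zero (pow_ne_zero 2 hμ) hr0') hσ)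
          (mul_ne_zero (by norm_num) (pow_ne_zero 3 hl0))
      have hst : s = t := by
        rcases mul_eq_zero.1 key with h | h
        · exact absurd h hA
        · rcases mul_eq_zero.1 h with h' | h' <;> linarith [sub_eq_zero.1 h']
      refine hpq ?_
      rw [hst, cross3_smul_left, cross3_smul_right, cross3_self]; simp
    · -- main case
      have hst : s ≠ t := by
        rintro rfl
        exact hpq (by rw [cross3_smul_left, cross3_smul_right, cross3_self]; simp)
      have hut : u ≠ t := by
        rintro rfl
        exact hpr (by rw [cross3_smul_left, cross3_smul_right, cross3_self]; simp)
      have key : (4*l^3*μ^2*σ*ρ*(s-t)*(u-t)) * (l*(s-t)*(u-t)+4) = 0 := by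
        simp only [HypPerp, cross3_a0, cross3_a1, cross3_a2, smul_a, Pt_a0, Pt_a1,
          Pt_a2] at hperp
        linear_combination hperp
      have hE : l*(s-t)*(u-t)+4 = 0 := by
        rcases mul_eq_zero.1 key with h | h
        · exact absurd h (mul_ne_zero (mul_ne_zero (mul_ne_zero (mul_ne_zero (mul_ne_zero
            (mul_ne_zero (by norm_num) (pow_ne_zero 3 hl0)) (pow_ne_zero 2 hμ)) hσ) hρ)
            (sub_ne_zero.2 hst)) (sub_ne_zero.2 hut))
        · exact h
      unfold Coll dot3
      simp only [cross3_a0, cross3_a1, cross3_a2, smul_a, Pt_a0, Pt_a1, Pt_a2,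
        Ft_a0, Ft_a1, Ft_a2]
      linear_combination (4*l^2*σ*ρ*(s-u)) * hE

/-- Uniqueness of the Frégier point at `μ • Pt l t`. -/
lemma unique_main (l : ℝ) (hl0 : l ≠ 0) (t μ : ℝ) (hμ : μ ≠ 0) (f' : PP) (hf0 : f' ≠ 0)
    (hfr : IsFregier (fun v => l * (v 1 ^ 2 + v 2 ^ 2 - v 0 ^ 2) + (v 2 - v 0) ^ 2 = 0)
      HypPerp (μ • Pt l t) f') :
    ∃ τ : ℝ, τ ≠ 0 ∧ f' = τ • Ft l t := by
  obtain ⟨a, ha0, ha4, ha4'⟩ : ∃ a : ℝ, a ≠ 0 ∧ l*a^2 - 4 ≠ 0 ∧ l*a^2 + 4 ≠ 0 := by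
    by_cases h4 : l = 4 ∨ l = -4
    · refine ⟨2, by norm_num, ?_, ?_⟩ <;> rcases h4 with rfl | rfl <;> norm_num
    · push_neg at h4
      refine ⟨1, one_ne_zero, ?_, ?_⟩ <;> intro h
      · exact h4.1 (by linarith)
      · exact h4.2 (by linarith)
  have hcrQ : ∀ b : ℝ, b ≠ 0 → cross3 (μ • Pt l t) (Pt l (t+b)) ≠ 0 := by
    intro b hb hzero
    have h0 := congrFun hzero 0
    have h2 := congrFun hzero 2
    simp only [cross3_a0, cross3_a1, cross3_a2, smul_a, Pt_a0, Pt_a1, Pt_a2, zero_a] at h0 h2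
    have hv : μ * (-4*l^2*b) = 0 := by linear_combination h0 + h2
    exact (mul_ne_zero hμ (mul_ne_zero (mul_ne_zero (by norm_num) (pow_ne_zero 2 hl0)) hb)) hv
  have hcrR : ∀ b : ℝ, b ≠ 0 → cross3 (μ • Pt l t) (Rt l t b) ≠ 0 := by
    intro b hb hzero
    have h0 := congrFun hzero 0
    have h2 := congrFun hzero 2
    simp only [cross3_a0, cross3_a1, cross3_a2, smul_a, Pt_a0, Pt_a1, Pt_a2,
      Rt_a0, Rt_a1, Rt_a2, zero_a] at h0 h2
    have hv : μ * (16*l^3*b) = 0 := by linear_combination h0 + h2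
    exact (mul_ne_zero hμ (mul_ne_zero (mul_ne_zero (by norm_num) (pow_ne_zero 3 hl0)) hb)) hv
  have hperp : ∀ b : ℝ, HypPerp (μ • Pt l t) (Pt l (t+b)) (Rt l t b) := by
    intro b
    unfold HypPerp
    simp only [cross3_a0, cross3_a1, cross3_a2, smul_a, Pt_a0, Pt_a1, Pt_a2,
      Rt_a0, Rt_a1, Rt_a2]
    ring
  have h1 : dot3 (cross3 (Pt l (t+a)) (Rt l t a)) f' = 0 :=
    hfr (Pt l (t+a)) (Rt l t a) (onC_Pt l _) (onC_Rt l t a) (hcrQ a ha0) (hcrR a ha0) (hperp a)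
  have h2 : dot3 (cross3 (Pt l (t+(-a))) (Rt l t (-a))) f' = 0 :=
    hfr (Pt l (t+(-a))) (Rt l t (-a)) (onC_Pt l _) (onC_Rt l t (-a))
      (hcrQ (-a) (neg_ne_zero.2 ha0)) (hcrR (-a) (neg_ne_zero.2 ha0)) (hperp (-a))
  have hg := grassmann f' _ _ h1 h2
  have hw : cross3 (cross3 (Pt l (t+a)) (Rt l t a)) (cross3 (Pt l (t+(-a))) (Rt l t (-a)))
      = (-8*l^4*a*(l*a^2+4)^2*(l*a^2-4)) • Ft l t := by
    apply pp_eq <;>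
      simp only [cross3_a0, cross3_a1, cross3_a2, smul_a, Pt_a0, Pt_a1, Pt_a2,
        Rt_a0, Rt_a1, Rt_a2, Ft_a0, Ft_a1, Ft_a2] <;> ring
  have hκ : (-8*l^4*a*(l*a^2+4)^2*(l*a^2-4)) ≠ 0 :=
    mul_ne_zero (mul_ne_zero (mul_ne_zero (mul_ne_zero (by norm_num) (pow_ne_zero 4 hl0)) ha0)
      (pow_ne_zero 2 ha4')) ha4
  have hwne : cross3 (cross3 (Pt l (t+a)) (Rt l t a)) (cross3 (Pt l (t+(-a))) (Rt l t (-a))) ≠ 0 := by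
    rw [hw]; exact smul_ne_zero hκ (Ft_ne_zero l hl0 t)
  obtain ⟨τ, hτ⟩ := parallel_of_cross_eq_zero f' _ hg hwne
  refine ⟨τ * (-8*l^4*a*(l*a^2+4)^2*(l*a^2-4)), ?_, ?_⟩
  · intro h
    exact hf0 (by rw [hτ, hw, smul_smul, h, zero_smul])
  · rw [hτ, hw, smul_smul]

/-- For the horocycle `C : λ(x₁² + x₂² − x₀²) + (x₂ − x₀)² = 0`
(`λ ∉ {0,−1}`), the Frégier locus is contained in the conic
`λ(x₁² + x₂² − x₀²) + 5(x₂ − x₀)² = 0`; in particular the Frégier locus of a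
regular horocycle is never contained in a line. -/

theorem fregier_locus_of_horocycle
    (l : ℝ) (hl0 : l ≠ 0) (hl1 : l ≠ -1) :
    (∀ f ∈ FregierLocus
        (fun v => l * (v 1 ^ 2 + v 2 ^ 2 - v 0 ^ 2) + (v 2 - v 0) ^ 2 = 0) HypPerp,
      l * (f 1 ^ 2 + f 2 ^ 2 - f 0 ^ 2) + 5 * (f 2 - f 0) ^ 2 = 0) ∧
    ¬ ∃ L : PP, L ≠ 0 ∧
        ∀ f ∈ FregierLocus
          (fun v => l * (v 1 ^ 2 + v 2 ^ 2 - v 0 ^ 2) + (v 2 - v 0) ^ 2 = 0) HypPerp,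
          dot3 L f = 0 := by
  constructor
  · -- the Frégier locus lies on the conic `l(x₁²+x₂²-x₀²)+5(x₂-x₀)² = 0`
    intro f hf
    obtain ⟨p, hp0, hpC, hf0, hfig, huniq⟩ := hf
    rcases classify l hl0 p hp0 hpC with ⟨hp1, hp2, hp0'⟩ | ⟨μ, t, hμ, rfl⟩
    · -- `p` is the contact point: no Frégier point exists there, contradiction
      exfalso
      have hpe : p = p 0 • E3 := by apply pp_eq <;> simp [hp1, hp2]
      obtain ⟨t1, ht1, he1⟩ := huniq ![1,0,0] (pp_ne_zero _ (fun h => one_ne_zero h.1))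
        (by rw [hpe]; exact isFregier_inf l hl0 _ hp0' _)
      obtain ⟨t2, ht2, he2⟩ := huniq ![0,1,0] (pp_ne_zero _ (fun h => one_ne_zero h.2.1))
        (by rw [hpe]; exact isFregier_inf l hl0 _ hp0' _)
      have e1 := congrFun he1 1
      have e2 := congrFun he2 1
      simp only [smul_a] at e1 e2
      norm_num at e1 e2
      have hf1 : f 1 = 0 := e1.resolve_left ht1
      rw [hf1, mul_zero] at e2
      exact one_ne_zero e2
    · obtain ⟨τ, hτ0, hτ⟩ := huniq (Ft l t) (Ft_ne_zero l hl0 t) (isFregier_main l hl0 t μ hμ)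
      have hfe : f = τ⁻¹ • Ft l t := by
        rw [hτ, smul_smul, inv_mul_cancel₀ hτ0, one_smul]
      rw [hfe]
      simp only [smul_a, Ft_a0, Ft_a1, Ft_a2]
      field_simp
      ring
  · -- the locus is not contained in a line
    rintro ⟨L, hL0, hall⟩
    have hmem : ∀ t : ℝ, Ft l t ∈ FregierLocus
        (fun v => l * (v 1 ^ 2 + v 2 ^ 2 - v 0 ^ 2) + (v 2 - v 0) ^ 2 = 0) HypPerp := by
      intro t
      refine ⟨Pt l t, Pt_ne_zero l hl0 t, onC_Pt l t, Ft_ne_zero l hl0 t, ?_, ?_⟩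
      · have h := isFregier_main l hl0 t 1 one_ne_zero
        rwa [one_smul] at h
      · intro f' hf0 hfr
        exact unique_main l hl0 t 1 one_ne_zero f' hf0 (by rwa [one_smul])
    have e0 := hall _ (hmem 0)
    have e1 := hall _ (hmem 1)
    have e2 := hall _ (hmem (-1))
    simp only [dot3, Ft_a0, Ft_a1, Ft_a2] at e0 e1 e2
    have hL1 : L 1 = 0 := by
      have h : (4*l) * L 1 = 0 := by linear_combination e2 - e1
      rcases mul_eq_zero.1 h with h' | h'
      · exact absurd h' (mul_ne_zero (by norm_num) hl0)
      · exact h'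
    have hLz : L 0 = 0 := by
      have h : (2*l^2) * L 0 = 0 := by
        linear_combination 5*e0 - ((5-l)/2)*e1 - ((5-l)/2)*e2
      rcases mul_eq_zero.1 h with h' | h'
      · exact absurd h' (mul_ne_zero (by norm_num) (pow_ne_zero 2 hl0))
      · exact h'
    have hL2 : L 2 = 0 := by
      have h : (10:ℝ) * L 2 = 0 := by
        linear_combination e1 + e2 - (2*(2*l+5)) * hLz
      linarith
    exact hL0 (pp_eq L 0 hLz hL1 hL2)
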